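/- arXiv:1404.6362 — 2 statements merged into one kernel-verified Lean document; each statement's English description precedes it below -/
import Mathlib

section
/- Let c ∈ R and let w be a C^2 function on R^2_+ = {(x,y): x>0}, bounded below, continuous up to the boundary {x=0}, satisfying Δw + c w_y ≤ 0 in R^2_+, w ≥ 0 on {x = 0}, and for every R > 0, liminf_{|y|→∞} w(x,y) ≥ 0 uniformly in x ∈ [0,R]. Then w ≥ 0 in R^2_+. -/
open MeasureTheory Real Set Filter Topology

/-- Second derivative test: at a local minimum of a (locally C²) function on ℝ,
the second derivative is nonnegative. -/
lemma second_deriv_nonneg_of_isLocalMin {g : ℝ → ℝ} {a : ℝ}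
    (h1 : ∀ᶠ x in 𝓝 a, DifferentiableAt ℝ g x)
    (h2 : DifferentiableAt ℝ (deriv g) a)
    (hmin : IsLocalMin g a) : 0 ≤ deriv (deriv g) a := by
  by_contra hcon
  push_neg at hcon
  set L := deriv (deriv g) a with hL
  have hd0 : deriv g a = 0 := hmin.deriv_eq_zero
  have hslope : Tendsto (slope (deriv g) a) (𝓝[≠] a) (𝓝 L) :=
    hasDerivAt_iff_tendsto_slope.mp h2.hasDerivAt
  have hev : ∀ᶠ x in 𝓝[≠] a, slope (deriv g) a x < L / 2 :=
    hslope (Iio_mem_nhds (by linarith))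
  have hev' : ∀ᶠ x in 𝓝[>] a, slope (deriv g) a x < L / 2 :=
    hev.filter_mono (nhdsWithin_mono a fun x hx => ne_of_gt hx)
  have hneg : ∀ᶠ x in 𝓝[>] a, deriv g x < 0 := by
    filter_upwards [hev', self_mem_nhdsWithin] with x hx (hxa : a < x)
    have : slope (deriv g) a x = deriv g x / (x - a) := by
      simp [slope_def_field, hd0]
    rw [this] at hx
    have h2 : deriv g x / (x - a) < 0 := lt_of_lt_of_le hx (by linarith)
    have := mul_neg_of_neg_of_pos h2 (by linarith : (0:ℝ) < x - a)
    rwa [div_mul_cancel₀] at this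
    linarith
  have hcombo : ∀ᶠ x in 𝓝[>] a, deriv g x < 0 ∧ g a ≤ g x :=
    hneg.and (hmin.filter_mono nhdsWithin_le_nhds)
  obtain ⟨u, hu, hsub⟩ := mem_nhdsGT_iff_exists_Ioc_subset.mp hcombo
  rw [mem_Ioi] at hu
  obtain ⟨t, htp, hto, hta⟩ := eventually_nhds_iff.mp h1
  obtain ⟨r, hr, hball⟩ := Metric.isOpen_iff.mp hto a hta
  set v := min u (a + r / 2) with hv
  have hav : a < v := lt_min hu (by linarith)
  have hdiff : ∀ x ∈ Icc a v, DifferentiableAt ℝ g x := by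
    intro x hx
    apply htp
    apply hball
    rw [Metric.mem_ball, Real.dist_eq, abs_of_nonneg (by linarith [hx.1])]
    have h1 : x ≤ v := hx.2
    have h2 : v ≤ a + r / 2 := min_le_right _ _
    linarith
  have hanti : StrictAntiOn g (Icc a v) := by
    apply strictAntiOn_of_deriv_neg (convex_Icc a v)
      (fun x hx => (hdiff x hx).continuousAt.continuousWithinAt)
    intro x hx
    rw [interior_Icc] at hx
    exact (hsub ⟨hx.1, le_trans hx.2.le (min_le_left _ _)⟩).1
  have h1' : g v < g a := hanti (left_mem_Icc.mpr hav.le) (right_mem_Icc.mpr hav.le) hav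
  have h2' : g a ≤ g v := (hsub ⟨hav, min_le_left _ _⟩).2
  linarith

/-- From a C² function on an open set: eventual differentiability and
differentiability of the derivative. -/
lemma contDiffOn_two_facts {g : ℝ → ℝ} {s : Set ℝ} (hg : ContDiffOn ℝ 2 g s)
    (hso : IsOpen s) {a : ℝ} (ha : a ∈ s) :
    (∀ᶠ x in 𝓝 a, DifferentiableAt ℝ g x) ∧ DifferentiableAt ℝ (deriv g) a := by
  constructor
  · filter_upwards [hso.mem_nhds ha] with x hx
    exact ((hg.differentiableOn (by norm_num)).differentiableAt (hso.mem_nhds hx))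
  · exact ((hg.deriv_of_isOpen (m := 1) hso (by norm_num)).differentiableOn
      (by norm_num)).differentiableAt (hso.mem_nhds ha)

/-- Phragmén–Lindelöf-type maximum principle on the half-plane: if
`Δw + c w_y ≤ 0` in `ℝ²₊`, `w` is bounded below, continuous up to the boundary,
nonnegative on `{x = 0}`, and `liminf_{|y|→∞} w ≥ 0` uniformly on `x`-compact sets,
then `w ≥ 0` in `ℝ²₊`. -/
theorem maximum_principle_halfplane (c : ℝ) (w : ℝ → ℝ → ℝ)
    (hw2 : ContDiffOn ℝ 2 (fun p : ℝ × ℝ => w p.1 p.2) {p : ℝ × ℝ | 0 < p.1})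
    (hwc : ContinuousOn (fun p : ℝ × ℝ => w p.1 p.2) {p : ℝ × ℝ | 0 ≤ p.1})
    (hbdd : ∃ b : ℝ, ∀ x ≥ (0 : ℝ), ∀ y : ℝ, b ≤ w x y)
    (hsub : ∀ x > (0 : ℝ), ∀ y : ℝ,
      deriv (fun x' => deriv (fun x'' => w x'' y) x') x + deriv (deriv (w x)) y +
        c * deriv (w x) y ≤ 0)
    (hbdry : ∀ y : ℝ, 0 ≤ w 0 y)
    (hliminf : ∀ R > (0 : ℝ), ∀ ε > (0 : ℝ), ∃ M : ℝ,
      ∀ x ∈ Icc (0 : ℝ) R, ∀ y : ℝ, M ≤ |y| → -ε ≤ w x y) :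
    ∀ x > (0 : ℝ), ∀ y : ℝ, 0 ≤ w x y := by
  -- slice regularity
  have hsliceX : ∀ y : ℝ, ContDiffOn ℝ 2 (fun x => w x y) (Ioi 0) := by
    intro y
    exact hw2.comp ((contDiff_id.prodMk contDiff_const).contDiffOn)
      (fun x hx => hx)
  have hsliceY : ∀ x : ℝ, 0 < x → ContDiffOn ℝ 2 (w x) (univ : Set ℝ) := by
    intro x hx
    exact hw2.comp ((contDiff_const.prodMk contDiff_id).contDiffOn)
      (fun y _ => hx)
  intro x0 hx0 y0
  obtain ⟨b, hb⟩ := hbdd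
  have key : ∀ ε > (0:ℝ), -(2*ε) ≤ w x0 y0 := by
    intro ε hε
    set η := ε / (x0 + 1) with hηdef
    have hηpos : 0 < η := div_pos hε (by linarith)
    have hηx0 : η * (x0 + 1) = ε := by
      rw [hηdef]; exact div_mul_cancel₀ ε (ne_of_gt (by linarith))
    set R := max (x0 + 1) ((|b| + ε)/η + 1) with hRdef
    have hRx0 : x0 + 1 ≤ R := le_max_left _ _
    have hRpos : 0 < R := by linarith
    have hRb : |b| + ε ≤ η * (R + 1) := by
      have h1 : (|b| + ε)/η + 1 ≤ R := le_max_right _ _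
      have h2 : η * ((|b| + ε)/η) = |b| + ε := by field_simp
      nlinarith [abs_nonneg b]
    obtain ⟨M, hM⟩ := hliminf R hRpos ε hε
    set S := max (|y0| + 1) |M| with hSdef
    have hSy0 : |y0| + 1 ≤ S := le_max_left _ _
    have hSpos : 0 < S := lt_of_lt_of_le (by positivity) hSy0
    have hSM : M ≤ S := le_trans (le_abs_self M) (le_max_right _ _)
    set Q : Set (ℝ × ℝ) := Icc (0:ℝ) R ×ˢ Icc (-S) S with hQdef
    have hQc : IsCompact Q := isCompact_Icc.prod isCompact_Icc
    have hy0S : |y0| ≤ S := by linarith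
    have hz : ((x0, y0) : ℝ × ℝ) ∈ Q := by
      refine ⟨⟨hx0.le, by linarith⟩, ?_, ?_⟩
      · linarith [neg_abs_le y0]
      · linarith [le_abs_self y0]
    have hQsub : Q ⊆ {p : ℝ × ℝ | 0 ≤ p.1} := fun p hp => hp.1.1
    suffices hkey2 : ∀ δ > (0:ℝ), -(2*ε) - δ * (Real.exp R + 1) ≤ w x0 y0 by
      by_contra hc
      push_neg at hc
      have hEpos : (0:ℝ) < Real.exp R + 1 := by positivity
      set δ := (-(2*ε) - w x0 y0) / (2 * (Real.exp R + 1)) with hδdef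
      have hδpos : 0 < δ := by
        apply div_pos (by linarith) (by linarith)
      have hδE : δ * (Real.exp R + 1) = (-(2*ε) - w x0 y0) / 2 := by
        rw [hδdef, ← div_div, div_mul_cancel₀ _ hEpos.ne']
      have := hkey2 δ hδpos
      rw [hδE] at this
      linarith
    intro δ hδ
    -- the perturbed function
    set u : ℝ × ℝ → ℝ := fun p => w p.1 p.2 + η * (p.1 + 1) - δ * Real.exp p.1 with hudef
    have hucont : ContinuousOn u Q := by
      apply ContinuousOn.sub
      · exact (hwc.mono hQsub).add (by fun_prop)
      · fun_prop
    obtain ⟨p, hpQ, hpmin⟩ := hQc.exists_isMinOn ⟨(x0, y0), hz⟩ hucont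
    -- interior case is impossible
    have hint : ¬ (p.1 ∈ Ioo (0:ℝ) R ∧ p.2 ∈ Ioo (-S) S) := by
      rintro ⟨hp1, hp2⟩
      have hQnhds : Q ∈ 𝓝 p := by
        rw [hQdef]
        apply mem_nhds_iff.mpr
        exact ⟨Ioo (0:ℝ) R ×ˢ Ioo (-S) S,
          Set.prod_mono Ioo_subset_Icc_self Ioo_subset_Icc_self,
          isOpen_Ioo.prod isOpen_Ioo, hp1, hp2⟩
      have hlm : IsLocalMin u p := hpmin.isLocalMin hQnhds
      have hp1pos : 0 < p.1 := hp1.1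
      -- x-slice
      set f : ℝ → ℝ := fun x => w x p.2 + η * (x + 1) - δ * Real.exp x with hfdef
      have hlmf : IsLocalMin f p.1 := by
        have := hlm.comp_continuous
          (g := fun x : ℝ => ((x, p.2) : ℝ × ℝ)) (by fun_prop) (b := p.1)
        exact this
      obtain ⟨hXd, hXd'⟩ := contDiffOn_two_facts (hsliceX p.2) isOpen_Ioi hp1pos
      have hsm : ∀ x : ℝ, HasDerivAt (fun x' => η * (x' + 1) - δ * Real.exp x')
          (η - δ * Real.exp x) x := by
        intro x
        have h1 : HasDerivAt (fun x' : ℝ => η * (x' + 1)) η x := by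
          simpa using (((hasDerivAt_id x).add_const 1).const_mul η)
        have h2 : HasDerivAt (fun x' : ℝ => δ * Real.exp x') (δ * Real.exp x) x :=
          (Real.hasDerivAt_exp x).const_mul δ
        exact h1.sub h2
      have hfd : ∀ᶠ x in 𝓝 p.1, DifferentiableAt ℝ f x := by
        filter_upwards [hXd] with x hx
        exact (hx.add (by fun_prop)).sub (by fun_prop)
      have hfeq : deriv f =ᶠ[𝓝 p.1]
          fun x => deriv (fun x'' => w x'' p.2) x + (η - δ * Real.exp x) := by
        filter_upwards [hXd] with x hx
        have h := hx.hasDerivAt.add (hsm x)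
        have h2 : HasDerivAt f (deriv (fun x'' => w x'' p.2) x + (η - δ * Real.exp x)) x := by
          have e : f = (fun x => w x p.2) + fun x' => η * (x' + 1) - δ * Real.exp x' := by
            funext x
            simp only [hfdef, Pi.add_apply]
            ring
          rw [e]; exact h
        exact h2.deriv
      have hfd' : DifferentiableAt ℝ (deriv f) p.1 := by
        rw [Filter.EventuallyEq.differentiableAt_iff hfeq]
        exact hXd'.add (by fun_prop)
      have hf2 := second_deriv_nonneg_of_isLocalMin hfd hfd' hlmf
      have hderiv2f : deriv (deriv f) p.1
          = deriv (fun x' => deriv (fun x'' => w x'' p.2) x') p.1 - δ * Real.exp p.1 := by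
        rw [hfeq.deriv_eq]
        have h1 : HasDerivAt (fun x => deriv (fun x'' => w x'' p.2) x + (η - δ * Real.exp x))
            (deriv (fun x' => deriv (fun x'' => w x'' p.2) x') p.1 + (0 - δ * Real.exp p.1))
            p.1 :=
          hXd'.hasDerivAt.add
            ((hasDerivAt_const p.1 η).sub ((Real.hasDerivAt_exp p.1).const_mul δ))
        rw [h1.deriv]
        ring
      rw [hderiv2f] at hf2
      -- y-slice
      set gY : ℝ → ℝ := fun y => w p.1 y + η * (p.1 + 1) - δ * Real.exp p.1 with hgdef
      have hlmg : IsLocalMin gY p.2 := by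
        have := hlm.comp_continuous
          (g := fun y : ℝ => ((p.1, y) : ℝ × ℝ)) (by fun_prop) (b := p.2)
        exact this
      have hgeq : deriv gY = deriv (w p.1) := by
        funext z
        rw [hgdef]
        rw [deriv_sub_const, deriv_add_const]
      obtain ⟨hYd, hYd'⟩ := contDiffOn_two_facts (hsliceY p.1 hp1pos) isOpen_univ (mem_univ p.2)
      have hgd : ∀ᶠ y in 𝓝 p.2, DifferentiableAt ℝ gY y := by
        filter_upwards [hYd] with y hy
        exact (hy.add_const _).sub_const _
      have hgd' : DifferentiableAt ℝ (deriv gY) p.2 := by rw [hgeq]; exact hYd'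
      have hg2 := second_deriv_nonneg_of_isLocalMin hgd hgd' hlmg
      have hwyy : 0 ≤ deriv (deriv (w p.1)) p.2 := by rwa [hgeq] at hg2
      have hwy : deriv (w p.1) p.2 = 0 := by
        have h := hlmg.deriv_eq_zero
        rwa [hgeq] at h
      have hfin := hsub p.1 hp1pos p.2
      rw [hwy] at hfin
      have hprod : 0 < δ * Real.exp p.1 := mul_pos hδ (Real.exp_pos p.1)
      linarith
    -- boundary case
    obtain ⟨⟨hp10, hp1R⟩, hp2l, hp2r⟩ := hpQ
    have hboundary : p.1 = 0 ∨ p.1 = R ∨ p.2 = -S ∨ p.2 = S := by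
      by_contra hnb
      push_neg at hnb
      obtain ⟨h1, h2, h3, h4⟩ := hnb
      exact hint ⟨⟨lt_of_le_of_ne hp10 (Ne.symm h1), lt_of_le_of_ne hp1R h2⟩,
        lt_of_le_of_ne hp2l (Ne.symm h3), lt_of_le_of_ne hp2r h4⟩
    have hexp : Real.exp p.1 ≤ Real.exp R := Real.exp_le_exp.mpr hp1R
    have hdexp : δ * Real.exp p.1 ≤ δ * Real.exp R :=
      mul_le_mul_of_nonneg_left hexp hδ.le
    have hupval : u p = w p.1 p.2 + η * (p.1 + 1) - δ * Real.exp p.1 := rfl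
    have hup : -ε - δ * Real.exp R - δ ≤ u p := by
      rcases hboundary with h | h | h | h
      · have h0 : 0 ≤ w p.1 p.2 := by rw [h]; exact hbdry p.2
        rw [hupval, h]
        rw [h] at h0
        simp only [Real.exp_zero]
        have hδR : 0 < δ * Real.exp R := mul_pos hδ (Real.exp_pos R)
        nlinarith
      · have h0 : b ≤ w p.1 p.2 := hb p.1 hp10 p.2
        rw [hupval, h]
        rw [h] at h0
        have habs : 0 ≤ b + |b| := by
          rcases abs_cases b with ⟨h', _⟩ | ⟨h', _⟩ <;> linarith
        linarith
      · have h0 : -ε ≤ w p.1 p.2 := by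
          apply hM p.1 ⟨hp10, hp1R⟩ p.2
          rw [h, abs_neg, abs_of_pos hSpos]
          exact hSM
        rw [hupval]
        have hη0 : 0 ≤ η * (p.1 + 1) := mul_nonneg hηpos.le (by linarith)
        linarith
      · have h0 : -ε ≤ w p.1 p.2 := by
          apply hM p.1 ⟨hp10, hp1R⟩ p.2
          rw [h, abs_of_pos hSpos]
          exact hSM
        rw [hupval]
        have hη0 : 0 ≤ η * (p.1 + 1) := mul_nonneg hηpos.le (by linarith)
        linarith
    have humin : u p ≤ u (x0, y0) := hpmin hz
    have huz : u (x0, y0) = w x0 y0 + η * (x0 + 1) - δ * Real.exp x0 := rfl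
    rw [huz, hηx0] at humin
    have hex0 : 0 < δ * Real.exp x0 := mul_pos hδ (Real.exp_pos x0)
    have hring : δ * (Real.exp R + 1) = δ * Real.exp R + δ := by ring
    linarith
  by_contra hcon
  push_neg at hcon
  have := key (-(w x0 y0)/4) (by linarith)
  linarith
end

section
/- Let c ∈ R and let v be a C^2 bounded function on the closed half-plane satisfying Δv + c v_y ≤ 0 in R^2_+, with lim_{|y|→∞} v(x,y) = 0 uniformly for x in compact sets. Suppose there is a nonempty set H ⊂ R such that v(0,y) > 0 for y ∈ H, and for y ∉ H, -v_x(0,y) + d(y) v(0,y) ≥ 0 with d(y) ≥ 0, where d is continuous on R \ H. Then v > 0 in the closed half-plane. -/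
open MeasureTheory Real Set Filter

open Topology

lemma deriv_nonneg_right {g : ℝ → ℝ} {g' : ℝ} (hg : HasDerivAt g g' 0)
    {b : ℝ} (hb : 0 < b) (h : ∀ t ∈ Set.Ioc (0:ℝ) b, g 0 ≤ g t) : 0 ≤ g' := by
  have h1 : HasDerivWithinAt g g' (Set.Ioi 0) 0 := hg.hasDerivWithinAt
  rw [hasDerivWithinAt_iff_tendsto_slope] at h1
  have h2 : Set.Ioi (0:ℝ) \ {0} = Set.Ioi 0 := by
    ext t; simp +contextual [ne_of_gt]
  rw [h2] at h1
  refine ge_of_tendsto h1 ?_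
  filter_upwards [Ioc_mem_nhdsGT_of_mem ⟨le_refl _, hb⟩] with t ht
  have h3 := h t ht
  have htpos : 0 < t := ht.1
  rw [slope_def_field]
  exact div_nonneg (by linarith) (by simpa using htpos.le)


lemma secondDeriv_nonneg_of_isLocalMin {f : ℝ → ℝ} (hf : ContDiff ℝ 2 f) {a : ℝ}
    (h : IsLocalMin f a) : 0 ≤ deriv (deriv f) a := by
  by_contra hneg
  push_neg at hneg
  have h2 : ContDiff ℝ 1 (deriv f) := by
    have := (contDiff_succ_iff_deriv (n := 1)).mp (by exact_mod_cast hf)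
    exact this.2.2
  have hdf : Differentiable ℝ (deriv f) := h2.differentiable (by norm_num)
  have hcont : Continuous (deriv (deriv f)) := by
    have := (contDiff_succ_iff_deriv (n := 0)).mp (by exact_mod_cast h2)
    exact this.2.2.continuous
  -- deriv (deriv f) < 0 on a ball around a
  have hev : ∀ᶠ x in 𝓝 a, deriv (deriv f) x < 0 :=
    (hcont.continuousAt).eventually_lt continuousAt_const hneg
  obtain ⟨ε, hε, hball⟩ := Metric.eventually_nhds_iff_ball.mp hev
  -- f' strictly anti on Icc (a - ε/2) (a + ε/2) ⊆ ball
  have hanti : StrictAntiOn (deriv f) (Icc (a - ε/2) (a + ε/2)) := by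
    apply strictAntiOn_of_deriv_neg (convex_Icc _ _) (hdf.continuous.continuousOn)
    intro x hx
    rw [interior_Icc] at hx
    apply hball
    rw [Real.ball_eq_Ioo]
    constructor <;> [linarith [hx.1]; linarith [hx.2]]
  have hfa : deriv f a = 0 := h.deriv_eq_zero
  -- f' < 0 on (a, a + ε/2]
  have hf'neg : ∀ t ∈ Set.Ioc a (a + ε/2), deriv f t < 0 := by
    intro t ht
    have := hanti (by constructor <;> [linarith; linarith] : a ∈ Icc (a - ε/2) (a + ε/2))
      (by constructor <;> [linarith [ht.1]; linarith [ht.2]]) ht.1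
    rwa [hfa] at this
  -- f strictly decreasing on [a, a + ε/2]
  have hanti2 : StrictAntiOn f (Icc a (a + ε/2)) := by
    apply strictAntiOn_of_deriv_neg (convex_Icc _ _)
      (hf.continuous.continuousOn)
    intro x hx
    rw [interior_Icc] at hx
    exact hf'neg x ⟨hx.1, hx.2.le⟩
  -- contradiction with local min
  have hev2 : ∀ᶠ t in 𝓝[>] a, f a ≤ f t := (h.filter_mono nhdsWithin_le_nhds)
  have hev3 : ∀ᶠ t in 𝓝[>] a, f t < f a := by
    filter_upwards [Ioc_mem_nhdsGT_of_mem
      (show a ∈ Ico a (a + ε/2) from ⟨le_refl a, by linarith⟩)] with t ht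
    exact hanti2 ⟨le_refl a, by linarith⟩ ⟨ht.1.le, ht.2⟩ ht.1
  obtain ⟨t, h4, h5⟩ := (hev2.and hev3).exists
  linarith


lemma not_isLocalMin_2d {c : ℝ} {f : ℝ × ℝ → ℝ} {p : ℝ × ℝ}
    (hx : ContDiff ℝ 2 (fun x => f (x, p.2))) (hy : ContDiff ℝ 2 (fun y => f (p.1, y)))
    (hL : deriv (deriv (fun x => f (x, p.2))) p.1 + deriv (deriv (fun y => f (p.1, y))) p.2
      + c * deriv (fun y => f (p.1, y)) p.2 < 0) : ¬ IsLocalMin f p := by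
  intro h
  have hgx : IsLocalMin (fun x => f (x, p.2)) p.1 := by
    have ht : Filter.Tendsto (fun x : ℝ => (x, p.2)) (𝓝 p.1) (𝓝 p) := by
      have : Continuous (fun x : ℝ => (x, p.2)) := by fun_prop
      exact this.continuousAt (x := p.1)
    have h' : ∀ᶠ x in 𝓝 p.1, f p ≤ f (x, p.2) := ht.eventually h
    simpa [IsLocalMin, IsMinFilter] using h'
  have hgy : IsLocalMin (fun y => f (p.1, y)) p.2 := by
    have ht : Filter.Tendsto (fun y : ℝ => (p.1, y)) (𝓝 p.2) (𝓝 p) := by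
      have : Continuous (fun y : ℝ => (p.1, y)) := by fun_prop
      exact this.continuousAt (x := p.2)
    have h' : ∀ᶠ y in 𝓝 p.2, f p ≤ f (p.1, y) := ht.eventually h
    simpa [IsLocalMin, IsMinFilter] using h'
  have h1 := secondDeriv_nonneg_of_isLocalMin hx hgx
  have h2 := secondDeriv_nonneg_of_isLocalMin hy hgy
  have h3 : deriv (fun y => f (p.1, y)) p.2 = 0 := hgy.deriv_eq_zero
  rw [h3] at hL
  linarith

lemma exists_isMinOn_off {K S : Set (ℝ × ℝ)} (hK : IsCompact K) (hne : K.Nonempty)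
    (hS : IsOpen S) (hSK : S ⊆ K) {f : ℝ × ℝ → ℝ} (hf : Continuous f)
    (h : ∀ p ∈ S, ¬ IsLocalMin f p) : ∃ p ∈ K \ S, IsMinOn f K p := by
  obtain ⟨p, hpK, hmin⟩ := hK.exists_isMinOn hne hf.continuousOn
  refine ⟨p, ⟨hpK, fun hpS => h p hpS (hmin.isLocalMin ?_), ⟩, hmin⟩
  exact mem_nhds_iff.mpr ⟨S, hSK, hS, hpS⟩


lemma hasDerivAt_gauss (α a x : ℝ) :
    HasDerivAt (fun x => Real.exp (-α*(x-a)^2)) (Real.exp (-α*(x-a)^2) * (-2*α*(x-a))) x := by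
  have h1 : HasDerivAt (fun x : ℝ => -α*(x-a)^2) (-2*α*(x-a)) x := by
    have h2 : HasDerivAt (fun x : ℝ => (x - a)^2) (2*(x-a)) x := by
      simpa using ((hasDerivAt_id x).sub_const a).fun_pow 2
    simpa [mul_comm, mul_assoc, mul_left_comm] using h2.const_mul (-α)
  exact h1.exp

lemma deriv_gauss (α a : ℝ) :
    deriv (fun x => Real.exp (-α*(x-a)^2))
      = fun x => Real.exp (-α*(x-a)^2) * (-2*α*(x-a)) := by
  funext x; exact (hasDerivAt_gauss α a x).deriv

lemma deriv2_gauss (α a x : ℝ) :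
    deriv (deriv (fun x => Real.exp (-α*(x-a)^2))) x
      = Real.exp (-α*(x-a)^2) * (4*α^2*(x-a)^2 - 2*α) := by
  rw [deriv_gauss]
  have h1 : HasDerivAt (fun x => Real.exp (-α*(x-a)^2) * (-2*α*(x-a)))
      (Real.exp (-α*(x-a)^2) * (-2*α*(x-a)) * (-2*α*(x-a))
        + Real.exp (-α*(x-a)^2) * (-2*α)) x := by
    have h2 : HasDerivAt (fun x : ℝ => -2*α*(x-a)) (-2*α) x := by
      simpa using ((hasDerivAt_id x).sub_const a).const_mul (-2*α)
    exact (hasDerivAt_gauss α a x).mul h2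
  rw [h1.deriv]; ring

lemma contDiff_gauss (α a : ℝ) : ContDiff ℝ 2 (fun x => Real.exp (-α*(x-a)^2)) :=
  Real.contDiff_exp.comp (contDiff_const.mul ((contDiff_id.sub contDiff_const).pow 2))

lemma contDiff_sliceX {v : ℝ → ℝ → ℝ} (hv : ContDiff ℝ 2 (fun p : ℝ × ℝ => v p.1 p.2))
    (y : ℝ) : ContDiff ℝ 2 (fun x => v x y) :=
  hv.comp (contDiff_id.prodMk contDiff_const)

lemma contDiff_sliceY {v : ℝ → ℝ → ℝ} (hv : ContDiff ℝ 2 (fun p : ℝ × ℝ => v p.1 p.2))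
    (x : ℝ) : ContDiff ℝ 2 (v x) :=
  hv.comp (contDiff_const.prodMk contDiff_id)


lemma differentiable_deriv_of_contDiff2 {f : ℝ → ℝ} (hf : ContDiff ℝ 2 f) :
    Differentiable ℝ (deriv f) := by
  have := (contDiff_succ_iff_deriv (n := 1)).mp (by exact_mod_cast hf)
  exact this.2.2.differentiable (by norm_num)

lemma deriv_shape {f g : ℝ → ℝ} (hf : Differentiable ℝ f) (hg : Differentiable ℝ g)
    (k C : ℝ) : deriv (fun x => f x + k * g x + C) = fun x => deriv f x + k * deriv g x := by
  funext x
  rw [deriv_add_const]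
  rw [deriv_fun_add (hf x) ((hg x).const_mul k), deriv_const_mul k (hg x)]

lemma deriv2_shape {f g : ℝ → ℝ} (hf : ContDiff ℝ 2 f) (hg : ContDiff ℝ 2 g)
    (k C x : ℝ) : deriv (deriv (fun x => f x + k * g x + C)) x
      = deriv (deriv f) x + k * deriv (deriv g) x := by
  rw [deriv_shape (hf.differentiable (by norm_num)) (hg.differentiable (by norm_num)) k C]
  rw [deriv_fun_add (differentiable_deriv_of_contDiff2 hf x)
    ((differentiable_deriv_of_contDiff2 hg x).const_mul k),
    deriv_const_mul k (differentiable_deriv_of_contDiff2 hg x)]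

lemma contDiff2_shape {f g : ℝ → ℝ} (hf : ContDiff ℝ 2 f) (hg : ContDiff ℝ 2 g)
    (k C : ℝ) : ContDiff ℝ 2 (fun x => f x + k * g x + C) :=
  (hf.add ((contDiff_const).mul hg)).add contDiff_const


lemma deriv_shape2 {f g1 g2 : ℝ → ℝ} (hf : Differentiable ℝ f) (hg1 : Differentiable ℝ g1)
    (hg2 : Differentiable ℝ g2) (k1 k2 C : ℝ) :
    deriv (fun x => f x + k1 * g1 x + k2 * g2 x + C)
      = fun x => deriv f x + k1 * deriv g1 x + k2 * deriv g2 x := by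
  funext x
  rw [deriv_add_const]
  rw [deriv_fun_add ((hf x).fun_add ((hg1 x).const_mul k1)) ((hg2 x).const_mul k2),
    deriv_fun_add (hf x) ((hg1 x).const_mul k1), deriv_const_mul k1 (hg1 x),
    deriv_const_mul k2 (hg2 x)]

lemma deriv2_shape2 {f g1 g2 : ℝ → ℝ} (hf : ContDiff ℝ 2 f) (hg1 : ContDiff ℝ 2 g1)
    (hg2 : ContDiff ℝ 2 g2) (k1 k2 C x : ℝ) :
    deriv (deriv (fun x => f x + k1 * g1 x + k2 * g2 x + C)) x
      = deriv (deriv f) x + k1 * deriv (deriv g1) x + k2 * deriv (deriv g2) x := by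
  rw [deriv_shape2 (hf.differentiable (by norm_num)) (hg1.differentiable (by norm_num))
    (hg2.differentiable (by norm_num)) k1 k2 C]
  have d1 := differentiable_deriv_of_contDiff2 hf
  have d2 := differentiable_deriv_of_contDiff2 hg1
  have d3 := differentiable_deriv_of_contDiff2 hg2
  rw [deriv_fun_add ((d1 x).fun_add ((d2 x).const_mul k1)) ((d3 x).const_mul k2),
    deriv_fun_add (d1 x) ((d2 x).const_mul k1), deriv_const_mul k1 (d2 x),
    deriv_const_mul k2 (d3 x)]

lemma contDiff2_shape2 {f g1 g2 : ℝ → ℝ} (hf : ContDiff ℝ 2 f) (hg1 : ContDiff ℝ 2 g1)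
    (hg2 : ContDiff ℝ 2 g2) (k1 k2 C : ℝ) :
    ContDiff ℝ 2 (fun x => f x + k1 * g1 x + k2 * g2 x + C) :=
  ((hf.add (contDiff_const.mul hg1)).add (contDiff_const.mul hg2)).add contDiff_const

lemma deriv2_id' (x : ℝ) : deriv (deriv (fun t : ℝ => t)) x = 0 := by
  simp

lemma deriv2_exp' (x : ℝ) : deriv (deriv (fun t : ℝ => Real.exp t)) x = Real.exp x := by
  simp [Real.deriv_exp]

lemma phragmen (c : ℝ) (v : ℝ → ℝ → ℝ)
    (hv : ContDiff ℝ 2 (fun p : ℝ × ℝ => v p.1 p.2))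
    (hbdd : ∃ M : ℝ, ∀ x ≥ (0 : ℝ), ∀ y : ℝ, |v x y| ≤ M)
    (hsub : ∀ x > (0 : ℝ), ∀ y : ℝ,
      deriv (fun x' => deriv (fun x'' => v x'' y) x') x + deriv (deriv (v x)) y +
        c * deriv (v x) y ≤ 0)
    (hlim : ∀ R > (0 : ℝ), ∀ ε > (0 : ℝ), ∃ M : ℝ,
      ∀ x ∈ Icc (0 : ℝ) R, ∀ y : ℝ, M ≤ |y| → |v x y| ≤ ε)
    (A : ℝ) (hA0 : A ≤ 0) (hAb : ∀ y : ℝ, A ≤ v 0 y) :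
    ∀ x ≥ (0 : ℝ), ∀ y : ℝ, A ≤ v x y := by
  intro x₀ hx₀ y₀
  obtain ⟨M, hM⟩ := hbdd
  have hM0 : 0 ≤ M := le_trans (abs_nonneg _) (hM 0 le_rfl 0)
  have key : ∀ ε > (0:ℝ), A - ε*(x₀+3) ≤ v x₀ y₀ := by
    intro ε hε
    set X : ℝ := x₀ + (M + |A|)/ε + 1 with hX
    have hXpos : 0 < X := by
      have : 0 ≤ (M + |A|)/ε := div_nonneg (by positivity) hε.le
      rw [hX]; linarith
    have hXx₀ : x₀ ≤ X := by
      have : 0 ≤ (M + |A|)/ε := div_nonneg (by positivity) hε.le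
      rw [hX]; linarith
    have hεX : M + |A| ≤ ε * X := by
      have h1 : ε * ((M + |A|)/ε) = M + |A| := by field_simp
      have h2 : ε * X = ε*x₀ + (M + |A|) + ε := by rw [hX]; rw [mul_add, mul_add, h1]; ring
      nlinarith
    obtain ⟨M₀, hM₀⟩ := hlim X hXpos ε hε
    set Y : ℝ := max (|y₀| + 1) (|M₀| + 1) with hY
    have hYy₀ : |y₀| < Y := lt_of_lt_of_le (by linarith [abs_nonneg y₀]) (le_max_left _ _)
    have hYM₀ : M₀ ≤ Y := le_trans (le_trans (le_abs_self M₀) (by linarith)) (le_max_right _ _)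
    have hYpos : 0 < Y := lt_of_lt_of_le (by positivity) (le_max_left _ _)
    set δ : ℝ := ε * Real.exp (-X) with hδ
    have hδpos : 0 < δ := by rw [hδ]; positivity
    have hδbound : ∀ x ≤ X, δ * Real.exp x ≤ ε := by
      intro x hx
      rw [hδ, mul_assoc, ← Real.exp_add]
      have h1 : Real.exp (-X + x) ≤ 1 := Real.exp_le_one_iff.mpr (by linarith)
      nlinarith
    set W : ℝ × ℝ → ℝ := fun q => v q.1 q.2 + ε * q.1 + (-δ) * Real.exp q.1 + (2*ε - A)
      with hW
    have hWc : Continuous W := by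
      rw [hW]
      have := hv.continuous
      fun_prop
    set K : Set (ℝ × ℝ) := Icc 0 X ×ˢ Icc (-Y) Y with hK
    set S : Set (ℝ × ℝ) := Ioo 0 X ×ˢ Ioo (-Y) Y with hS
    have hKC : IsCompact K := isCompact_Icc.prod isCompact_Icc
    have hSopen : IsOpen S := isOpen_Ioo.prod isOpen_Ioo
    have hSK : S ⊆ K := Set.prod_mono Ioo_subset_Icc_self Ioo_subset_Icc_self
    have hKne : K.Nonempty := ⟨(0, 0), by
      simp only [hK, Set.mem_prod, mem_Icc]
      constructor
      · exact ⟨le_rfl, hXpos.le⟩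
      · constructor <;> linarith⟩
    have hnolocal : ∀ p ∈ S, ¬ IsLocalMin W p := by
      intro p hp
      simp only [hS, Set.mem_prod, mem_Ioo] at hp
      have hpx : 0 < p.1 := hp.1.1
      have ex : (fun x => W (x, p.2)) = (fun x => v x p.2
          + ε * x + (-δ) * Real.exp x + (2*ε - A)) := by
        funext x; simp only [hW]
      have ey : (fun y => W (p.1, y)) = (fun y => (v p.1) y
          + (ε * p.1 + (-δ) * Real.exp p.1 + (2*ε - A))) := by
        funext y; simp only [hW]; ring
      apply not_isLocalMin_2d (c := c)
      · rw [ex]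
        exact contDiff2_shape2 (g1 := fun x : ℝ => x) (g2 := fun x => Real.exp x)
          (contDiff_sliceX hv p.2) contDiff_id Real.contDiff_exp _ _ _
      · rw [ey]
        exact (contDiff_sliceY hv p.1).add contDiff_const
      · rw [ex, ey]
        rw [deriv2_shape2 (f := fun x => v x p.2) (g1 := fun x : ℝ => x)
          (g2 := fun x => Real.exp x) (contDiff_sliceX hv p.2) contDiff_id Real.contDiff_exp
          ε (-δ) (2*ε - A) p.1]
        have e1 : deriv (deriv (fun y => v p.1 y + (ε * p.1 + (-δ) * Real.exp p.1 + (2*ε - A)))) p.2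
            = deriv (deriv (v p.1)) p.2 := by
          have : deriv (fun y => v p.1 y + (ε * p.1 + (-δ) * Real.exp p.1 + (2*ε - A)))
              = deriv (v p.1) := by
            funext z; exact deriv_add_const _
          rw [this]
        have e2 : deriv (fun y => v p.1 y + (ε * p.1 + (-δ) * Real.exp p.1 + (2*ε - A))) p.2
            = deriv (v p.1) p.2 := deriv_add_const _
        rw [e1, e2, deriv2_id', deriv2_exp']
        have hLv : deriv (deriv (fun x => v x p.2)) p.1 + deriv (deriv (v p.1)) p.2
            + c * deriv (v p.1) p.2 ≤ 0 := hsub p.1 hpx p.2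
        have hexp : 0 < Real.exp p.1 := Real.exp_pos _
        nlinarith [mul_pos hδpos hexp]
    obtain ⟨p₁, ⟨hp₁K, hp₁S⟩, hp₁min⟩ := exists_isMinOn_off hKC hKne hSopen hSK hWc hnolocal
    have hW0 : 0 ≤ W p₁ := by
      have hp₁K' := hp₁K
      simp only [hK, Set.mem_prod, mem_Icc] at hp₁K'
      obtain ⟨⟨hx1, hx2⟩, ⟨hy1, hy2⟩⟩ := hp₁K'
      have hδe : δ * Real.exp p₁.1 ≤ ε := hδbound p₁.1 hx2
      have hcases : p₁.1 = 0 ∨ p₁.1 = X ∨ p₁.2 = -Y ∨ p₁.2 = Y := by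
        simp only [hS, Set.mem_prod, mem_Ioo, not_and_or] at hp₁S
        rcases hp₁S with h | h
        · rcases h with h' | h'
          · left; linarith [not_lt.mp h']
          · right; left; linarith [not_lt.mp h']
        · rcases h with h' | h'
          · right; right; left; linarith [not_lt.mp h']
          · right; right; right; linarith [not_lt.mp h']
      simp only [hW]
      rcases hcases with h | h | h | h
      · -- x = 0
        rw [h]
        have := hAb p₁.2
        have hδ1 : δ * Real.exp 0 ≤ ε := hδbound 0 hXpos.le
        rw [Real.exp_zero] at hδ1
        simp only [Real.exp_zero]
        nlinarith
      · -- x = X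
        rw [h]
        have h1 : -M ≤ v X p₁.2 := by
          have := hM X hXpos.le p₁.2
          rw [abs_le] at this; exact this.1
        have h2 : δ * Real.exp X = ε := by
          rw [hδ, mul_assoc, ← Real.exp_add]
          simp
        have hAA : -A = |A| := (abs_of_nonpos hA0).symm
        nlinarith
      · -- y = -Y
        have h1 : |v p₁.1 p₁.2| ≤ ε := by
          apply hM₀ p₁.1 ⟨hx1, hx2⟩
          rw [h, abs_neg, abs_of_pos hYpos]; exact hYM₀
        rw [abs_le] at h1
        nlinarith [h1.1]
      · -- y = Y
        have h1 : |v p₁.1 p₁.2| ≤ ε := by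
          apply hM₀ p₁.1 ⟨hx1, hx2⟩
          rw [h, abs_of_pos hYpos]; exact hYM₀
        rw [abs_le] at h1
        nlinarith [h1.1]
    have hmem : (x₀, y₀) ∈ K := by
      simp only [hK, Set.mem_prod, mem_Icc]
      have := abs_le.mp hYy₀.le
      exact ⟨⟨hx₀, hXx₀⟩, ⟨this.1, this.2⟩⟩
    have := le_trans hW0 (hp₁min hmem)
    simp only [hW] at this
    have hδe : 0 ≤ δ * Real.exp x₀ := by positivity
    nlinarith
  by_contra hcon
  push_neg at hcon
  set D : ℝ := A - v x₀ y₀ with hD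
  have hDpos : 0 < D := by rw [hD]; linarith
  have hε : 0 < D / (x₀ + 4) := div_pos hDpos (by linarith)
  have h1 := key _ hε
  have h2 : D/(x₀+4) * (x₀+3) < D := by
    rw [div_mul_eq_mul_div, div_lt_iff₀ (by linarith)]
    nlinarith
  rw [hD] at h1 h2
  linarith


set_option maxHeartbeats 1000000 in
lemma hopf_lemma (c : ℝ) (v : ℝ → ℝ → ℝ)
    (hv : ContDiff ℝ 2 (fun p : ℝ × ℝ => v p.1 p.2))
    (hsub : ∀ x > (0 : ℝ), ∀ y : ℝ,
      deriv (fun x' => deriv (fun x'' => v x'' y) x') x + deriv (deriv (v x)) y +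
        c * deriv (v x) y ≤ 0)
    (m a b : ℝ) (w : ℝ × ℝ) (r2 : ℝ) (hr2 : 0 < r2)
    (hr2w : (w.1 - a)^2 + (w.2 - b)^2 = r2)
    (hball : ∀ q : ℝ × ℝ, (q.1 - a)^2 + (q.2 - b)^2 < r2 → 0 < q.1 ∧ m < v q.1 q.2)
    (hKm : ∀ q : ℝ × ℝ, (q.1 - a)^2 + (q.2 - b)^2 ≤ r2 → m ≤ v q.1 q.2)
    (hwm : v w.1 w.2 = m) :
    0 < fderiv ℝ (fun p : ℝ × ℝ => v p.1 p.2) w (a - w.1, b - w.2) := by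
  have hVc : Continuous (fun p : ℝ × ℝ => v p.1 p.2) := hv.continuous
  obtain ⟨α, hαpos, hαkey⟩ : ∃ α : ℝ, 0 < α ∧ α * r2 = 4 + c^2 + r2 + r2 := by
    refine ⟨(4 + c^2 + r2 + r2)/r2, div_pos (by nlinarith [sq_nonneg c]) hr2, ?_⟩
    field_simp
  -- inner sphere minimum
  set Ki : Set (ℝ × ℝ) := {q | (q.1 - a)^2 + (q.2 - b)^2 = r2/4} with hKi
  have hKiC : IsCompact Ki := by
    apply IsCompact.of_isClosed_subset
      ((isCompact_Icc (a := a - Real.sqrt r2) (b := a + Real.sqrt r2)).prod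
        (isCompact_Icc (a := b - Real.sqrt r2) (b := b + Real.sqrt r2)))
    · exact isClosed_eq (show Continuous (fun q : ℝ × ℝ => (q.1 - a)^2 + (q.2 - b)^2) by fun_prop)
        continuous_const
    · rintro ⟨q1, q2⟩ hq
      simp only [hKi, mem_setOf_eq] at hq
      have h1 : (q1 - a)^2 ≤ r2 := by nlinarith [sq_nonneg (q2 - b)]
      have h2 : (q2 - b)^2 ≤ r2 := by nlinarith [sq_nonneg (q1 - a)]
      have e1 : |q1 - a| ≤ Real.sqrt r2 := by
        rw [← Real.sqrt_sq_eq_abs]; exact Real.sqrt_le_sqrt h1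
      have e2 : |q2 - b| ≤ Real.sqrt r2 := by
        rw [← Real.sqrt_sq_eq_abs]; exact Real.sqrt_le_sqrt h2
      rw [abs_le] at e1 e2
      exact ⟨⟨by linarith [e1.1], by linarith [e1.2]⟩, ⟨by linarith [e2.1], by linarith [e2.2]⟩⟩
  have hKine : Ki.Nonempty := by
    refine ⟨(a + Real.sqrt r2 / 2, b), ?_⟩
    simp only [hKi, mem_setOf_eq]
    have : Real.sqrt r2 ^ 2 = r2 := Real.sq_sqrt hr2.le
    nlinarith
  obtain ⟨qm, hqmKi, hqmin⟩ := hKiC.exists_isMinOn hKine hVc.continuousOn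
  set δ : ℝ := v qm.1 qm.2 - m with hδ
  have hδpos : 0 < δ := by
    have : (qm.1 - a)^2 + (qm.2 - b)^2 < r2 := by
      have := hqmKi
      simp only [hKi, mem_setOf_eq] at this
      linarith
    have := (hball qm this).2
    rw [hδ]; linarith
  set δ' : ℝ := δ * Real.exp (α * (r2/4)) with hδ'
  have hδ'pos : 0 < δ' := by positivity
  -- the barrier and comparison function
  set E : ℝ := Real.exp (-α * r2) with hE
  set φ : ℝ × ℝ → ℝ := fun q =>
    v q.1 q.2 - m - δ' * (Real.exp (-α*(q.1 - a)^2) * Real.exp (-α*(q.2 - b)^2) - E) with hφ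
  have hprod : ∀ q : ℝ × ℝ, Real.exp (-α*(q.1 - a)^2) * Real.exp (-α*(q.2 - b)^2)
      = Real.exp (-α * ((q.1 - a)^2 + (q.2 - b)^2)) := by
    intro q; rw [← Real.exp_add]; ring_nf
  have hφc : Continuous φ := by
    apply Continuous.sub (hVc.sub continuous_const)
    apply continuous_const.mul
    apply Continuous.sub _ continuous_const
    exact (((contDiff_gauss α a).continuous).comp continuous_fst).mul
      (((contDiff_gauss α b).continuous).comp continuous_snd)
  -- step A : φ ≥ 0 on the annulus K
  set K : Set (ℝ × ℝ) := {q | r2/4 ≤ (q.1 - a)^2 + (q.2 - b)^2 ∧ (q.1 - a)^2 + (q.2 - b)^2 ≤ r2}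
    with hK
  set S : Set (ℝ × ℝ) := {q | r2/4 < (q.1 - a)^2 + (q.2 - b)^2 ∧ (q.1 - a)^2 + (q.2 - b)^2 < r2}
    with hS
  have hKC : IsCompact K := by
    apply IsCompact.of_isClosed_subset
      ((isCompact_Icc (a := a - Real.sqrt r2) (b := a + Real.sqrt r2)).prod
        (isCompact_Icc (a := b - Real.sqrt r2) (b := b + Real.sqrt r2)))
    · have hcont : Continuous (fun q : ℝ × ℝ => (q.1 - a)^2 + (q.2 - b)^2) := by fun_prop
      rw [hK, Set.setOf_and]
      exact IsClosed.inter (isClosed_le continuous_const hcont)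
        (isClosed_le hcont continuous_const)
    · rintro ⟨q1, q2⟩ hq
      simp only [hK, mem_setOf_eq] at hq
      have h1 : (q1 - a)^2 ≤ r2 := by nlinarith [sq_nonneg (q2 - b)]
      have h2 : (q2 - b)^2 ≤ r2 := by nlinarith [sq_nonneg (q1 - a)]
      have e1 : |q1 - a| ≤ Real.sqrt r2 := by
        rw [← Real.sqrt_sq_eq_abs]; exact Real.sqrt_le_sqrt h1
      have e2 : |q2 - b| ≤ Real.sqrt r2 := by
        rw [← Real.sqrt_sq_eq_abs]; exact Real.sqrt_le_sqrt h2
      rw [abs_le] at e1 e2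
      exact ⟨⟨by linarith [e1.1], by linarith [e1.2]⟩, ⟨by linarith [e2.1], by linarith [e2.2]⟩⟩
  have hKw : w ∈ K := by
    simp only [hK, mem_setOf_eq, hr2w]
    constructor <;> linarith
  have hSopen : IsOpen S := by
    have hcont : Continuous (fun q : ℝ × ℝ => (q.1 - a)^2 + (q.2 - b)^2) := by fun_prop
    rw [hS, Set.setOf_and]
    exact IsOpen.inter (isOpen_lt continuous_const hcont)
      (isOpen_lt hcont continuous_const)
  have hSK : S ⊆ K := by
    rintro q ⟨h1, h2⟩; exact ⟨h1.le, h2.le⟩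
  -- no local min of φ in S
  have hnolocal : ∀ p ∈ S, ¬ IsLocalMin φ p := by
    intro p hp
    have hpS := hp
    simp only [hS, mem_setOf_eq] at hpS
    have hpx : 0 < p.1 := (hball p hpS.2).1
    -- slice identities
    have ex : (fun x => φ (x, p.2)) = (fun x => (fun x' => v x' p.2) x
        + (-δ' * Real.exp (-α*(p.2 - b)^2)) * (fun x' => Real.exp (-α*(x' - a)^2)) x
        + (δ' * E - m)) := by
      funext x; simp only [hφ]; ring
    have ey : (fun y => φ (p.1, y)) = (fun y => (v p.1) y
        + (-δ' * Real.exp (-α*(p.1 - a)^2)) * (fun y' => Real.exp (-α*(y' - b)^2)) y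
        + (δ' * E - m)) := by
      funext y; simp only [hφ]; ring
    apply not_isLocalMin_2d (c := c)
    · rw [ex]; exact contDiff2_shape (contDiff_sliceX hv p.2) (contDiff_gauss α a) _ _
    · rw [ey]; exact contDiff2_shape (contDiff_sliceY hv p.1) (contDiff_gauss α b) _ _
    · rw [ex, ey]
      rw [deriv2_shape (contDiff_sliceX hv p.2) (contDiff_gauss α a),
          deriv2_shape (contDiff_sliceY hv p.1) (contDiff_gauss α b),
          deriv_shape ((contDiff_sliceY hv p.1).differentiable (by norm_num))
            ((contDiff_gauss α b).differentiable (by norm_num)),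
          deriv2_gauss, deriv2_gauss]
      beta_reduce
      rw [(hasDerivAt_gauss α b p.2).deriv]
      have hLv : deriv (deriv (fun x => v x p.2)) p.1 + deriv (deriv (v p.1)) p.2
          + c * deriv (v p.1) p.2 ≤ 0 := hsub p.1 hpx p.2
      -- barrier strict supersolution bound
      have hgpos1 : 0 < Real.exp (-α*(p.1 - a)^2) := Real.exp_pos _
      have hgpos2 : 0 < Real.exp (-α*(p.2 - b)^2) := Real.exp_pos _
      have hbar : Real.exp (-α*(p.2 - b)^2) * (Real.exp (-α*(p.1 - a)^2) * (4*α^2*(p.1-a)^2 - 2*α))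
          + Real.exp (-α*(p.1 - a)^2) * (Real.exp (-α*(p.2 - b)^2) * (4*α^2*(p.2-b)^2 - 2*α))
          + c * (Real.exp (-α*(p.1 - a)^2) * (Real.exp (-α*(p.2 - b)^2) * (-2*α*(p.2-b))))
          > 0 := by
        have hsq1 : r2/4 < (p.1 - a)^2 + (p.2 - b)^2 := hpS.1
        have hsq2 : (p.1 - a)^2 + (p.2 - b)^2 < r2 := hpS.2
        have key : 4*α^2*((p.1-a)^2 + (p.2-b)^2) - 4*α - 2*α*c*(p.2-b) > 0 := by
          have hS2 : (p.2-b)^2 ≤ (p.1-a)^2 + (p.2-b)^2 := by nlinarith [sq_nonneg (p.1-a)]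
          have e5 : α^2 * r2 = 4*α + α*c^2 + α*r2 + α*r2 := by
            linear_combination α * hαkey
          have e6 : 4*α^2*(r2/4) ≤ 4*α^2*((p.1-a)^2 + (p.2-b)^2) :=
            mul_le_mul_of_nonneg_left hsq1.le (by positivity)
          have e7 : 0 ≤ α * (c - (p.2-b))^2 := by positivity
          have e8 : α * ((p.1-a)^2 + (p.2-b)^2) ≤ α * r2 :=
            mul_le_mul_of_nonneg_left hsq2.le hαpos.le
          have e9 : α * (p.2-b)^2 ≤ α * ((p.1-a)^2+(p.2-b)^2) :=
            mul_le_mul_of_nonneg_left hS2 hαpos.le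
          have e10 : 0 < α * r2 := mul_pos hαpos hr2
          linarith [e5, e6, e7, e8, e9, e10]
        have expand : Real.exp (-α*(p.2 - b)^2) * (Real.exp (-α*(p.1 - a)^2) * (4*α^2*(p.1-a)^2 - 2*α))
          + Real.exp (-α*(p.1 - a)^2) * (Real.exp (-α*(p.2 - b)^2) * (4*α^2*(p.2-b)^2 - 2*α))
          + c * (Real.exp (-α*(p.1 - a)^2) * (Real.exp (-α*(p.2 - b)^2) * (-2*α*(p.2-b))))
          = (Real.exp (-α*(p.1 - a)^2) * Real.exp (-α*(p.2 - b)^2))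
            * (4*α^2*((p.1-a)^2 + (p.2-b)^2) - 4*α - 2*α*c*(p.2-b)) := by ring
        rw [expand]
        exact mul_pos (mul_pos hgpos1 hgpos2) key
      linarith [mul_pos hδ'pos hbar, hLv]
  -- minimum of φ on K is on the two spheres, where φ ≥ 0
  have hφK : ∀ q ∈ K, 0 ≤ φ q := by
    obtain ⟨p₁, ⟨hp₁K, hp₁S⟩, hp₁min⟩ := exists_isMinOn_off hKC ⟨w, hKw⟩ hSopen hSK hφc hnolocal
    have h0 : 0 ≤ φ p₁ := by
      have hp₁K' := hp₁K
      simp only [hK, mem_setOf_eq] at hp₁K'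
      simp only [hS, mem_setOf_eq, not_and_or, not_lt] at hp₁S
      rcases hp₁S with h | h
      · -- inner sphere
        have hsq : (p₁.1 - a)^2 + (p₁.2 - b)^2 = r2/4 := le_antisymm h hp₁K'.1
        have hmem : p₁ ∈ Ki := by simp only [hKi, mem_setOf_eq]; exact hsq
        have hvp : δ ≤ v p₁.1 p₁.2 - m := by
          have := hqmin hmem
          simp only [hδ]
          exact sub_le_sub_right this m
        simp only [hφ, hprod, hsq, hE]
        have hcomp : δ' * (Real.exp (-α * (r2/4)) - Real.exp (-α * r2)) ≤ δ := by
          have h1 : Real.exp (-α * (r2/4)) - Real.exp (-α * r2) ≤ Real.exp (-α * (r2/4)) := by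
            have := Real.exp_pos (-α * r2); linarith
          have h2 : δ' * Real.exp (-α * (r2/4)) = δ := by
            rw [hδ', mul_assoc, ← Real.exp_add]
            norm_num
          calc δ' * (Real.exp (-α * (r2/4)) - Real.exp (-α * r2))
              ≤ δ' * Real.exp (-α * (r2/4)) := by
                apply mul_le_mul_of_nonneg_left h1 hδ'pos.le
            _ = δ := h2
        linarith
      · -- outer sphere
        have hsq : (p₁.1 - a)^2 + (p₁.2 - b)^2 = r2 := le_antisymm hp₁K'.2 h
        have := hKm p₁ hp₁K'.2
        simp only [hφ, hprod, hsq, hE]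
        linarith
    intro q hq
    exact le_trans h0 (hp₁min hq)
  -- step B : the ray argument
  set u : ℝ → ℝ × ℝ := fun t => (w.1 + t*(a - w.1), w.2 + t*(b - w.2)) with hu
  have hu0 : u 0 = w := by simp [hu]
  have huD : HasDerivAt u (a - w.1, b - w.2) 0 := by
    apply HasDerivAt.prodMk
    · simpa using ((hasDerivAt_id (0:ℝ)).mul_const (a - w.1)).const_add w.1
    · simpa using ((hasDerivAt_id (0:ℝ)).mul_const (b - w.2)).const_add w.2
  set s : ℝ := fderiv ℝ (fun p : ℝ × ℝ => v p.1 p.2) w (a - w.1, b - w.2) with hs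
  have hVu : HasDerivAt (fun t => v (u t).1 (u t).2) s 0 := by
    have hfd : HasFDerivAt (fun p : ℝ × ℝ => v p.1 p.2)
        (fderiv ℝ (fun p : ℝ × ℝ => v p.1 p.2) w) (u 0) := by
      rw [hu0]
      exact (hv.differentiable (by norm_num) w).hasFDerivAt
    exact hfd.comp_hasDerivAt 0 huD
  have hGD : HasDerivAt (fun t => Real.exp (-(α*r2)*(t-1)^2))
      (Real.exp (-(α*r2)*(0-1)^2) * (-2*(α*r2)*(0-1))) 0 := hasDerivAt_gauss (α*r2) 1 0
  have hFeq : (fun t => φ (u t)) = (fun t =>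
      (fun t' => v (u t').1 (u t').2) t + (-δ') * (fun t' => Real.exp (-(α*r2)*(t'-1)^2)) t
        + (δ' * E - m)) := by
    funext t
    simp only [hφ, hu]
    have : Real.exp (-α*((w.1 + t*(a - w.1)) - a)^2) * Real.exp (-α*((w.2 + t*(b - w.2)) - b)^2)
        = Real.exp (-(α*r2)*(t-1)^2) := by
      rw [← Real.exp_add]
      congr 1
      rw [← hr2w]; ring
    rw [this]; ring
  have hFD : HasDerivAt (fun t => φ (u t))
      (s + (-δ') * (Real.exp (-(α*r2)*(0-1)^2) * (-2*(α*r2)*(0-1)))) 0 := by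
    rw [hFeq]
    exact (hVu.add (hGD.const_mul (-δ'))).add_const _
  have hF0 : φ (u 0) = 0 := by
    rw [hu0]
    simp only [hφ, hprod, hr2w, hE, hwm]
    ring
  have hFnonneg : ∀ t ∈ Set.Ioc (0:ℝ) (1/2), φ (u 0) ≤ φ (u t) := by
    intro t ht
    rw [hF0]
    apply hφK
    simp only [hK, hu, mem_setOf_eq]
    have e1 : ((w.1 + t*(a - w.1)) - a)^2 + ((w.2 + t*(b - w.2)) - b)^2 = (1-t)^2 * r2 := by
      rw [← hr2w]; ring
    rw [e1]
    have h1 : (1:ℝ)/2 ≤ 1 - t := by linarith [ht.2]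
    have h2 : (1:ℝ)/4 ≤ (1-t)^2 := by nlinarith
    have h3 : (1-t)^2 ≤ 1 := by nlinarith [ht.1]
    constructor
    · nlinarith [mul_le_mul_of_nonneg_right h2 hr2.le]
    · nlinarith [mul_le_mul_of_nonneg_right h3 hr2.le]
  have hkey := deriv_nonneg_right hFD (by norm_num : (0:ℝ) < 1/2) hFnonneg
  have hpos : 0 < δ' * (Real.exp (-(α*r2)) * (2*(α*r2))) := by
    have := Real.exp_pos (-(α*r2))
    have := mul_pos hαpos hr2
    positivity
  have : (-δ') * (Real.exp (-(α*r2)*(0-1)^2) * (-2*(α*r2)*(0-1)))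
      = -(δ' * (Real.exp (-(α*r2)) * (2*(α*r2)))) := by
    norm_num
  rw [this] at hkey
  linarith


set_option maxHeartbeats 2000000 in
lemma strong_min (c : ℝ) (v : ℝ → ℝ → ℝ)
    (hv : ContDiff ℝ 2 (fun p : ℝ × ℝ => v p.1 p.2))
    (hsub : ∀ x > (0 : ℝ), ∀ y : ℝ,
      deriv (fun x' => deriv (fun x'' => v x'' y) x') x + deriv (deriv (v x)) y +
        c * deriv (v x) y ≤ 0)
    (m : ℝ) (hm : ∀ x ≥ (0:ℝ), ∀ y : ℝ, m ≤ v x y)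
    (p₀ : ℝ × ℝ) (hp₀x : 0 < p₀.1) (hp₀v : m < v p₀.1 p₀.2) :
    ∀ q : ℝ × ℝ, 0 < q.1 → m < v q.1 q.2 := by
  have hVc : Continuous (fun p : ℝ × ℝ => v p.1 p.2) := hv.continuous
  set Z : Set (ℝ × ℝ) := {q | 0 < q.1 ∧ v q.1 q.2 = m} with hZ
  set Wp : Set (ℝ × ℝ) := {q | 0 < q.1 ∧ m < v q.1 q.2} with hWp
  -- the key claim : around any point of Z, a whole ball is in Z
  have hkey : ∀ z ∈ Z, ∀ q : ℝ × ℝ,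
      (q.1 - z.1)^2 + (q.2 - z.2)^2 < (z.1/3)^2 → q ∈ Z := by
    intro z hz q hq
    simp only [hZ, mem_setOf_eq] at hz
    obtain ⟨hzx, hzv⟩ := hz
    have hq1 : |q.1 - z.1| < z.1/3 := by
      rw [← Real.sqrt_sq_eq_abs]
      rw [show z.1/3 = Real.sqrt ((z.1/3)^2) by rw [Real.sqrt_sq (by linarith)]]
      apply Real.sqrt_lt_sqrt (sq_nonneg _)
      nlinarith [sq_nonneg (q.2 - z.2)]
    have hq1' := abs_lt.mp hq1
    have hqx : 0 < q.1 := by linarith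
    refine ⟨hqx, ?_⟩
    by_contra hqv
    have hqv' : m < v q.1 q.2 := lt_of_le_of_ne (hm q.1 hqx.le q.2) (Ne.symm hqv)
    -- the set of zero points within distance of z from q
    obtain ⟨B0, hB0⟩ : ∃ B0 : ℝ, B0 = (z.1 - q.1)^2 + (z.2 - q.2)^2 := ⟨_, rfl⟩
    have hB0lt : B0 < (z.1/3)^2 := by rw [hB0]; nlinarith [hq]
    set Z' : Set (ℝ × ℝ) :=
      {w' | (w'.1 - q.1)^2 + (w'.2 - q.2)^2 ≤ B0 ∧ v w'.1 w'.2 = m} with hZ'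
    have hZ'ne : Z'.Nonempty := ⟨z, by simp only [hZ', mem_setOf_eq]; exact ⟨by rw [hB0], hzv⟩⟩
    have hZ'C : IsCompact Z' := by
      apply IsCompact.of_isClosed_subset
        ((isCompact_Icc (a := q.1 - Real.sqrt B0) (b := q.1 + Real.sqrt B0)).prod
          (isCompact_Icc (a := q.2 - Real.sqrt B0) (b := q.2 + Real.sqrt B0)))
      · rw [hZ', Set.setOf_and]
        exact IsClosed.inter
          (isClosed_le (show Continuous (fun w' : ℝ × ℝ => (w'.1 - q.1)^2 + (w'.2 - q.2)^2)
            by fun_prop) continuous_const)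
          (isClosed_eq (by fun_prop) continuous_const)
      · rintro ⟨w1, w2⟩ hw
        simp only [hZ', mem_setOf_eq] at hw
        have h1 : (w1 - q.1)^2 ≤ B0 := by nlinarith [sq_nonneg (w2 - q.2), hw.1]
        have h2 : (w2 - q.2)^2 ≤ B0 := by nlinarith [sq_nonneg (w1 - q.1), hw.1]
        have e1 : |w1 - q.1| ≤ Real.sqrt B0 := by
          rw [← Real.sqrt_sq_eq_abs]; exact Real.sqrt_le_sqrt h1
        have e2 : |w2 - q.2| ≤ Real.sqrt B0 := by
          rw [← Real.sqrt_sq_eq_abs]; exact Real.sqrt_le_sqrt h2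
        rw [abs_le] at e1 e2
        exact ⟨⟨by linarith [e1.1], by linarith [e1.2]⟩, ⟨by linarith [e2.1], by linarith [e2.2]⟩⟩
    obtain ⟨ws, hwsZ', hwsmin⟩ := hZ'C.exists_isMinOn hZ'ne
      (show ContinuousOn (fun w' : ℝ × ℝ => (w'.1 - q.1)^2 + (w'.2 - q.2)^2) Z'
        by fun_prop)
    simp only [hZ', mem_setOf_eq] at hwsZ'
    obtain ⟨r2, hr2def⟩ : ∃ r2 : ℝ, r2 = (ws.1 - q.1)^2 + (ws.2 - q.2)^2 := ⟨_, rfl⟩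
    have hr2B0 : r2 ≤ B0 := by rw [hr2def]; exact hwsZ'.1
    have hr2pos : 0 < r2 := by
      rcases lt_or_eq_of_le (show (0:ℝ) ≤ r2 by rw [hr2def]; positivity) with h | h
      · exact h
      · exfalso
        rw [hr2def] at h
        have h2 : (ws.1 - q.1)^2 = 0 :=
          le_antisymm (by nlinarith [sq_nonneg (ws.2 - q.2)]) (sq_nonneg _)
        have h3 : (ws.2 - q.2)^2 = 0 :=
          le_antisymm (by nlinarith [sq_nonneg (ws.1 - q.1)]) (sq_nonneg _)
        have h2' : ws.1 = q.1 := by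
          have := pow_eq_zero_iff (n := 2) (by norm_num) |>.mp h2; linarith
        have h3' : ws.2 = q.2 := by
          have := pow_eq_zero_iff (n := 2) (by norm_num) |>.mp h3; linarith
        have h4 := hwsZ'.2
        rw [h2', h3'] at h4
        exact hqv h4
    -- coordinates of points in the closed ball are positive
    have hcoord : ∀ q' : ℝ × ℝ, (q'.1 - q.1)^2 + (q'.2 - q.2)^2 ≤ r2 → 0 < q'.1 := by
      intro q' hq'
      rw [hr2def] at hq'
      have hr2B0' : (ws.1 - q.1)^2 + (ws.2 - q.2)^2 ≤ B0 := hwsZ'.1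
      have h1 : (q'.1 - q.1)^2 < (z.1/3)^2 := by
        linarith [hq', hr2B0', hB0lt, sq_nonneg (q'.2 - q.2), sq_nonneg (ws.1 - q.1),
          sq_nonneg (ws.2 - q.2)]
      have h2 : |q'.1 - q.1| < z.1/3 := by
        rw [← Real.sqrt_sq_eq_abs]
        rw [show z.1/3 = Real.sqrt ((z.1/3)^2) by rw [Real.sqrt_sq (by linarith)]]
        exact Real.sqrt_lt_sqrt (sq_nonneg _) h1
      have := abs_lt.mp h2
      linarith
    have hHopf := hopf_lemma c v hv hsub m q.1 q.2 ws r2 hr2pos (by rw [hr2def])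
      (fun q' hq' => by
        refine ⟨hcoord q' hq'.le, ?_⟩
        rcases lt_or_eq_of_le (hm q'.1 (hcoord q' hq'.le).le q'.2) with h | h
        · exact h
        · exfalso
          have hq'Z' : q' ∈ Z' := by
            simp only [hZ', mem_setOf_eq]
            exact ⟨le_trans hq'.le hr2B0, h.symm⟩
          have := hwsmin hq'Z'
          simp only [Set.mem_setOf_eq] at this
          rw [← hr2def] at this
          linarith)
      (fun q' hq' => hm q'.1 (hcoord q' hq').le q'.2)
      hwsZ'.2
    -- but ws is an interior local minimum, so the derivative vanishes
    have hwsx : 0 < ws.1 := hcoord ws (le_of_eq hr2def.symm)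
    have hlocmin : IsLocalMin (fun p : ℝ × ℝ => v p.1 p.2) ws := by
      have hU : {p : ℝ × ℝ | 0 < p.1} ∈ 𝓝 ws := by
        apply IsOpen.mem_nhds (isOpen_lt continuous_const continuous_fst) hwsx
      filter_upwards [hU] with p hp
      rw [hwsZ'.2]
      exact hm p.1 (le_of_lt hp) p.2
    rw [hlocmin.fderiv_eq_zero] at hHopf
    simp at hHopf
  -- Z is open
  have hZopen : IsOpen Z := by
    rw [isOpen_iff_forall_mem_open]
    intro z hz
    have hzx : 0 < z.1 := by
      simp only [hZ, mem_setOf_eq] at hz; exact hz.1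
    refine ⟨{q | (q.1 - z.1)^2 + (q.2 - z.2)^2 < (z.1/3)^2}, fun q hq => hkey z hz q (by simpa using hq), ?_, ?_⟩
    · exact isOpen_lt (by fun_prop) continuous_const
    · simp only [mem_setOf_eq]
      have he : (z.1 - z.1)^2 + (z.2 - z.2)^2 = 0 := by ring
      rw [he]
      exact pow_pos (by linarith) 2
  have hWopen : IsOpen Wp := by
    have : Wp = {q : ℝ × ℝ | 0 < q.1} ∩ {q : ℝ × ℝ | m < v q.1 q.2} := by
      rw [hWp, Set.setOf_and]
    rw [this]
    exact (isOpen_lt continuous_const continuous_fst).inter (isOpen_lt continuous_const hVc)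
  -- the half plane is preconnected
  have hUconv : Convex ℝ {q : ℝ × ℝ | 0 < q.1} := by
    intro x hx y hy s t hs ht hst
    simp only [mem_setOf_eq] at *
    have : (s • x + t • y).1 = s * x.1 + t * y.1 := rfl
    rw [this]
    rcases eq_or_lt_of_le hs with h | h
    · rw [← h]; simpa using by nlinarith
    · nlinarith
  have hUpre : IsPreconnected {q : ℝ × ℝ | 0 < q.1} := hUconv.isPreconnected
  -- conclude
  intro q hq
  by_contra hcon
  have hqm : v q.1 q.2 = m := le_antisymm (not_lt.mp hcon) (hm q.1 hq.le q.2)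
  have hsub' : {q : ℝ × ℝ | 0 < q.1} ⊆ Z ∪ Wp := by
    intro p hp
    simp only [mem_setOf_eq] at hp
    rcases lt_or_eq_of_le (hm p.1 hp.le p.2) with h | h
    · right; exact ⟨hp, h⟩
    · left; exact ⟨hp, h.symm⟩
  have hZne : ({q : ℝ × ℝ | 0 < q.1} ∩ Z).Nonempty := ⟨q, hq, ⟨hq, hqm⟩⟩
  have hWne : ({q : ℝ × ℝ | 0 < q.1} ∩ Wp).Nonempty := ⟨p₀, hp₀x, ⟨hp₀x, hp₀v⟩⟩
  obtain ⟨x, hxU, hxZ, hxW⟩ := hUpre Z Wp hZopen hWopen hsub' hZne hWne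
  simp only [hZ, hWp, mem_setOf_eq] at hxZ hxW
  linarith [hxZ.2, hxW.2]


-- derivative of the horizontal slice at a boundary point, via the fderiv
lemma deriv_slice_eq_fderiv {v : ℝ → ℝ → ℝ}
    (hv : ContDiff ℝ 2 (fun p : ℝ × ℝ => v p.1 p.2)) (y : ℝ) :
    HasDerivAt (fun x => v x y)
      (fderiv ℝ (fun p : ℝ × ℝ => v p.1 p.2) ((0:ℝ), y) ((1:ℝ), (0:ℝ))) 0 := by
  have hu : HasDerivAt (fun t : ℝ => (t, y)) ((1:ℝ), (0:ℝ)) 0 :=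
    (hasDerivAt_id 0).prodMk (hasDerivAt_const 0 y)
  have hfd : HasFDerivAt (fun p : ℝ × ℝ => v p.1 p.2)
      (fderiv ℝ (fun p : ℝ × ℝ => v p.1 p.2) ((0:ℝ), y)) ((0:ℝ), y) :=
    (hv.differentiable (by norm_num) _).hasFDerivAt
  exact hfd.comp_hasDerivAt 0 hu

/-- Maximum principle with Robin boundary condition: if `Δv + c v_y ≤ 0` in `ℝ²₊`,
`v` is bounded and tends to `0` as `|y| → ∞` uniformly on `x`-compact sets,
`v(0,·) > 0` on a nonempty set `H`, and `-v_x + d v ≥ 0` with `d ≥ 0` on the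
boundary outside `H`, then `v > 0` on the closed half-plane. -/
theorem maximum_principle_robin (c : ℝ) (v : ℝ → ℝ → ℝ)
    (hv : ContDiff ℝ 2 (fun p : ℝ × ℝ => v p.1 p.2))
    (hbdd : ∃ M : ℝ, ∀ x ≥ (0 : ℝ), ∀ y : ℝ, |v x y| ≤ M)
    (hsub : ∀ x > (0 : ℝ), ∀ y : ℝ,
      deriv (fun x' => deriv (fun x'' => v x'' y) x') x + deriv (deriv (v x)) y +
        c * deriv (v x) y ≤ 0)
    (hlim : ∀ R > (0 : ℝ), ∀ ε > (0 : ℝ), ∃ M : ℝ,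
      ∀ x ∈ Icc (0 : ℝ) R, ∀ y : ℝ, M ≤ |y| → |v x y| ≤ ε)
    (H : Set ℝ) (hHne : H.Nonempty) (hHpos : ∀ y ∈ H, 0 < v 0 y)
    (d : ℝ → ℝ) (hd : ContinuousOn d Hᶜ)
    (hdpos : ∀ y ∉ H, 0 ≤ d y)
    (hrobin : ∀ y ∉ H, 0 ≤ -deriv (fun x => v x y) 0 + d y * v 0 y) :
    ∀ x ≥ (0 : ℝ), ∀ y : ℝ, 0 < v x y := by
  obtain ⟨M, hM⟩ := hbdd
  -- the infimum of the boundary values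
  set A : ℝ := sInf (Set.range (v 0)) with hA
  have hrne : (Set.range (v 0)).Nonempty := ⟨v 0 0, 0, rfl⟩
  have hbdd0 : BddBelow (Set.range (v 0)) := by
    refine ⟨-M, ?_⟩
    rintro t ⟨y, rfl⟩
    have := hM 0 le_rfl y
    rw [abs_le] at this
    linarith [this.1]
  have hAle : ∀ y, A ≤ v 0 y := fun y => csInf_le hbdd0 ⟨y, rfl⟩
  have hA0 : A ≤ 0 := by
    by_contra hcon
    push_neg at hcon
    obtain ⟨M₀, hM₀⟩ := hlim 1 one_pos (A/2) (by linarith)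
    have habs : M₀ ≤ |(|M₀| + 1)| := by
      rw [abs_of_nonneg (by positivity)]
      linarith [le_abs_self M₀]
    have h1 := hM₀ 0 ⟨le_rfl, by norm_num⟩ (|M₀| + 1) habs
    rw [abs_le] at h1
    have h2 := hAle (|M₀| + 1)
    linarith [h1.2]
  have hPL : ∀ x ≥ (0:ℝ), ∀ y, A ≤ v x y := phragmen c v hv ⟨M, hM⟩ hsub hlim A hA0 hAle
  -- a boundary Hopf-type contradiction machine, for a given level m
  have hbdryHopf : ∀ m : ℝ, (∀ x ≥ (0:ℝ), ∀ y : ℝ, m ≤ v x y) →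
      (∀ q : ℝ × ℝ, 0 < q.1 → m < v q.1 q.2) → ∀ y₁ : ℝ, v 0 y₁ = m →
      0 < deriv (fun x => v x y₁) 0 := by
    intro m hm hstrong y₁ hy₁
    have hH := hopf_lemma c v hv hsub m 1 y₁ ((0:ℝ), y₁) 1 one_pos (by norm_num)
      (fun q hq => by
        have hq1 : 0 < q.1 := by nlinarith [sq_nonneg (q.2 - y₁)]
        exact ⟨hq1, hstrong q hq1⟩)
      (fun q hq => by
        have hq1 : 0 ≤ q.1 := by nlinarith [sq_nonneg (q.2 - y₁)]
        exact hm q.1 hq1 q.2)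
      (by exact hy₁)
    have heq : ((1:ℝ) - ((0:ℝ), y₁).1, y₁ - ((0:ℝ), y₁).2) = ((1:ℝ), (0:ℝ)) := by
      norm_num
    rw [heq] at hH
    rw [(deriv_slice_eq_fderiv hv y₁).deriv]
    exact hH
  -- A = 0
  have hAzero : A = 0 := by
    by_contra hAne
    have hAneg : A < 0 := lt_of_le_of_ne hA0 hAne
    -- the boundary infimum is attained at some y₀
    have hconty : Continuous (v 0) := (contDiff_sliceY hv 0).continuous
    obtain ⟨M₁, hM₁⟩ := hlim 1 one_pos (-A/4) (by linarith)
    set S₀ : Set ℝ := {y | v 0 y ≤ A/2} with hS₀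
    have hS₀closed : IsClosed S₀ := isClosed_le hconty continuous_const
    have hS₀sub : S₀ ⊆ Icc (-(|M₁|+1)) (|M₁|+1) := by
      intro y hy
      simp only [hS₀, mem_setOf_eq] at hy
      by_contra hyout
      simp only [mem_Icc, not_and_or, not_le] at hyout
      have hyabs : M₁ ≤ |y| := by
        rcases hyout with h | h
        · have : |M₁| + 1 ≤ -y := by linarith
          linarith [le_abs_self M₁, neg_le_abs y]
        · linarith [le_abs_self M₁, le_abs_self y]
      have h1 := hM₁ 0 ⟨le_rfl, by norm_num⟩ y hyabs
      rw [abs_le] at h1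
      linarith [h1.1]
    have hS₀ne : S₀.Nonempty := by
      obtain ⟨t, ⟨y, rfl⟩, hlt⟩ := exists_lt_of_csInf_lt hrne
        (show sInf (Set.range (v 0)) < A/2 by rw [← hA]; linarith)
      exact ⟨y, le_of_lt hlt⟩
    have hS₀C : IsCompact S₀ := IsCompact.of_isClosed_subset isCompact_Icc hS₀closed hS₀sub
    obtain ⟨y₀, hy₀S, hy₀min⟩ := hS₀C.exists_isMinOn hS₀ne hconty.continuousOn
    simp only [hS₀, mem_setOf_eq] at hy₀S
    have hy₀A : v 0 y₀ = A := by
      apply le_antisymm _ (hAle y₀)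
      rw [hA]
      apply le_csInf hrne
      rintro t ⟨y, rfl⟩
      rcases le_or_gt (v 0 y) (A/2) with h | h
      · exact hy₀min h
      · linarith
    -- an interior point where v > A
    obtain ⟨M₂, hM₂⟩ := hlim 1 one_pos (-A/2) (by linarith)
    have habs2 : M₂ ≤ |(|M₂| + 1)| := by
      rw [abs_of_nonneg (by positivity)]
      linarith [le_abs_self M₂]
    have hp₀ : A < v 1 (|M₂|+1) := by
      have h1 := hM₂ 1 ⟨by norm_num, le_rfl⟩ (|M₂|+1) habs2
      rw [abs_le] at h1
      linarith [h1.1]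
    have hstrong := strong_min c v hv hsub A hPL ((1:ℝ), |M₂|+1) (by norm_num) hp₀
    have hderiv := hbdryHopf A hPL hstrong y₀ hy₀A
    have hy₀H : y₀ ∉ H := by
      intro hmem
      have := hHpos y₀ hmem
      rw [hy₀A] at this
      linarith
    have hrob := hrobin y₀ hy₀H
    have hdA : d y₀ * v 0 y₀ ≤ 0 :=
      mul_nonpos_of_nonneg_of_nonpos (hdpos y₀ hy₀H) (by rw [hy₀A]; exact hAneg.le)
    linarith
  -- now v ≥ 0, and positivity propagates
  have hm0 : ∀ x ≥ (0:ℝ), ∀ y : ℝ, (0:ℝ) ≤ v x y := by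
    intro x hx y
    have := hPL x hx y
    rwa [hAzero] at this
  -- an interior point of positivity
  obtain ⟨h₀, hh₀⟩ := hHne
  have hpos0 : 0 < v 0 h₀ := hHpos h₀ hh₀
  have hcx : ContinuousAt (fun t => v t h₀) 0 := (contDiff_sliceX hv h₀).continuous.continuousAt
  have hev : ∀ᶠ t in 𝓝 (0:ℝ), 0 < v t h₀ :=
    continuousAt_const.eventually_lt hcx hpos0
  obtain ⟨t₀, ht₀v, ht₀pos⟩ :=
    ((hev.filter_mono (nhdsWithin_le_nhds (s := Set.Ioi (0:ℝ)))).and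
      eventually_mem_nhdsWithin).exists
  have hstrong0 := strong_min c v hv hsub 0 hm0 (t₀, h₀) ht₀pos ht₀v
  -- conclusion
  intro x hx y
  rcases eq_or_lt_of_le hx with h | h
  · -- boundary point
    rw [← h]
    rcases lt_or_eq_of_le (hm0 0 le_rfl y) with hgt | heq
    · exact hgt
    · exfalso
      have hyH : y ∉ H := by
        intro hmem
        have := hHpos y hmem
        rw [← heq] at this
        linarith
      have hderiv := hbdryHopf 0 hm0 hstrong0 y heq.symm
      have hrob := hrobin y hyH
      rw [← heq] at hrob
      simp only [mul_zero] at hrob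
      linarith
  · exact hstrong0 (x, y) h
end
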